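/- (Injectivity of the evaluation map) With notation as in Nahm's inequality: let f : C₁(W₃)^⊥ → (M₁⊗M₂)* be defined by f(w₃')(w₁⊗w₂) = ⟨w₃', Y(w₁,z)w₂⟩. Suppose w₃' ∈ C₁(W₃)^⊥ satisfies ⟨w₃', Y(w₁,z)w₂⟩ = 0 for all w₁ ∈ M₁, w₂ ∈ M₂. Then by strong induction on the sum of ℕ-grading components of weights — using that modulo terms annihilated by w₃' (via the Jacobi identity and w₃' vanishing on C₁(W₃)), ⟨w₃', Y(u_{-1}w̃₁, z)w₂⟩ reduces to a combination of ⟨w₃', Y(w̃₁, z)ŵ₂⟩ with strictly smaller total grading — one obtains ⟨w₃', Y(w₁,z)w₂⟩ = 0 for all w₁ ∈ W₁, w₂ ∈ W₂. -/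

import Mathlib

/-- Graded splitting: if `W = C ⊕ M` with both `C` and `M` graded, then each
homogeneous element splits into homogeneous pieces in `C` and `M`. -/
lemma graded_split {W : Type*} [AddCommGroup W] [Module ℂ W]
    (Wn : ℕ → Submodule ℂ W) (h : DirectSum.IsInternal Wn)
    (C M : Submodule ℂ W) (hc : IsCompl C M)
    (hCgr : C = ⨆ n : ℕ, C ⊓ Wn n) (hMgr : M = ⨆ n : ℕ, M ⊓ Wn n)
    (n : ℕ) (x : W) (hx : x ∈ Wn n) :
    ∃ c ∈ C ⊓ Wn n, ∃ m ∈ M ⊓ Wn n, x = c + m := by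
  classical
  set e := LinearEquiv.ofBijective (DirectSum.coeLinearMap Wn) h with he
  set π : W →ₗ[ℂ] W := (Wn n).subtype ∘ₗ (DirectSum.component ℂ ℕ (fun i => Wn i) n)
      ∘ₗ e.symm.toLinearMap with hπ
  have hπ_same : ∀ v ∈ Wn n, π v = v := by
    intro v hv
    simp only [hπ, LinearMap.comp_apply, LinearEquiv.coe_toLinearMap, he]
    rw [DirectSum.component]
    exact congrArg Subtype.val (h.ofBijective_coeLinearMap_of_mem hv)
  have hπ_ne : ∀ k, k ≠ n → ∀ v ∈ Wn k, π v = 0 := by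
    intro k hk v hv
    simp only [hπ, LinearMap.comp_apply, LinearEquiv.coe_toLinearMap, he]
    rw [DirectSum.component]
    exact congrArg Subtype.val (h.ofBijective_coeLinearMap_of_mem_ne hk hv)
  have hπmem : ∀ (S : Submodule ℂ W), S = ⨆ k : ℕ, S ⊓ Wn k →
      ∀ v ∈ S, π v ∈ S ⊓ Wn n := by
    intro S hSgr v hv
    rw [hSgr] at hv
    obtain ⟨f, hf, rfl⟩ := (Submodule.mem_iSup_iff_exists_finsupp _ _).mp hv
    rw [map_finsuppSum]
    refine Submodule.sum_mem _ fun k _ => ?_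
    show π (f k) ∈ S ⊓ Wn n
    rcases eq_or_ne k n with rfl | hk
    · have hk2 : f k ∈ Wn k := (hf k).2
      rw [hπ_same _ hk2]
      exact ⟨(hf k).1, hk2⟩
    · rw [hπ_ne k hk _ (hf k).2]
      exact Submodule.zero_mem _
  obtain ⟨c, hcC, m, hmM, hcm⟩ : ∃ c ∈ C, ∃ m ∈ M, x = c + m := by
    have : x ∈ C ⊔ M := by rw [hc.sup_eq_top]; trivial
    obtain ⟨c, hcC, m, hmM, hcm⟩ := Submodule.mem_sup.mp this
    exact ⟨c, hcC, m, hmM, hcm.symm⟩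
  refine ⟨π c, hπmem C hCgr c hcC, π m, hπmem M hMgr m hmM, ?_⟩
  rw [← map_add, ← hcm, hπ_same x hx]

/-- injectivity of the evaluation map, abstract double
induction: let `B` be a bilinear pairing on ℕ-graded spaces
`W₁ = C₁ ⊕ M₁`, `W₂ = C₂ ⊕ M₂` (with graded complements), vanishing on
`M₁ × M₂`, such that on homogeneous elements `B(c, y)` for `c ∈ C₁` lies in the
span of values `B(x', y')` of strictly smaller total degree, and symmetrically
for `C₂`. Then `B ≡ 0`, i.e. `⟨w₃', Y(w₁, z)w₂⟩ = 0` for all `w₁, w₂`. -/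
theorem stmt_17 {W₁ W₂ : Type*} [AddCommGroup W₁] [Module ℂ W₁]
    [AddCommGroup W₂] [Module ℂ W₂]
    (W1n : ℕ → Submodule ℂ W₁) (W2n : ℕ → Submodule ℂ W₂)
    (h1 : DirectSum.IsInternal W1n) (h2 : DirectSum.IsInternal W2n)
    (C₁ M₁ : Submodule ℂ W₁) (C₂ M₂ : Submodule ℂ W₂)
    (hc1 : IsCompl C₁ M₁) (hc2 : IsCompl C₂ M₂)
    (hC1gr : C₁ = ⨆ n : ℕ, C₁ ⊓ W1n n) (hM1gr : M₁ = ⨆ n : ℕ, M₁ ⊓ W1n n)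
    (hC2gr : C₂ = ⨆ n : ℕ, C₂ ⊓ W2n n) (hM2gr : M₂ = ⨆ n : ℕ, M₂ ⊓ W2n n)
    (B : W₁ →ₗ[ℂ] W₂ →ₗ[ℂ] ℂ)
    (hM : ∀ x ∈ M₁, ∀ y ∈ M₂, B x y = 0)
    (hred1 : ∀ (n m : ℕ), ∀ c ∈ C₁ ⊓ W1n n, ∀ y ∈ W2n m,
      B c y ∈ Submodule.span ℂ
        {z : ℂ | ∃ (n' m' : ℕ) (x' : W₁) (y' : W₂),
          n' + m' < n + m ∧ x' ∈ W1n n' ∧ y' ∈ W2n m' ∧ z = B x' y'})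
    (hred2 : ∀ (n m : ℕ), ∀ x ∈ W1n n, ∀ c ∈ C₂ ⊓ W2n m,
      B x c ∈ Submodule.span ℂ
        {z : ℂ | ∃ (n' m' : ℕ) (x' : W₁) (y' : W₂),
          n' + m' < n + m ∧ x' ∈ W1n n' ∧ y' ∈ W2n m' ∧ z = B x' y'}) :
    ∀ (x : W₁) (y : W₂), B x y = 0 := by
  have key : ∀ N : ℕ, ∀ n m : ℕ, n + m = N →
      ∀ x ∈ W1n n, ∀ y ∈ W2n m, B x y = 0 := by
    intro N
    induction N using Nat.strong_induction_on with
    | _ N ih =>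
      intro n m hnm x hx y hy
      obtain ⟨c₁, hc₁, m₁, hm₁, hxd⟩ :=
        graded_split W1n h1 C₁ M₁ hc1 hC1gr hM1gr n x hx
      obtain ⟨c₂, hc₂, m₂, hm₂, hyd⟩ :=
        graded_split W2n h2 C₂ M₂ hc2 hC2gr hM2gr m y hy
      have hset : {z : ℂ | ∃ (n' m' : ℕ) (x' : W₁) (y' : W₂),
          n' + m' < n + m ∧ x' ∈ W1n n' ∧ y' ∈ W2n m' ∧ z = B x' y'} ⊆
          (⊥ : Submodule ℂ ℂ) := by
        rintro z ⟨n', m', x', y', hlt, hx', hy', rfl⟩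
        have := ih (n' + m') (hnm ▸ hlt) n' m' rfl x' hx' y' hy'
        simpa using this
      have hspan : ∀ z : ℂ, z ∈ Submodule.span ℂ {z : ℂ | ∃ (n' m' : ℕ)
          (x' : W₁) (y' : W₂), n' + m' < n + m ∧ x' ∈ W1n n' ∧ y' ∈ W2n m' ∧
          z = B x' y'} → z = 0 := by
        intro z hz
        have := (Submodule.span_le.mpr hset) hz
        simpa using this
      have hA : B c₁ y = 0 := hspan _ (hred1 n m c₁ hc₁ y hy)
      have hB : B m₁ c₂ = 0 := hspan _ (hred2 n m m₁ hm₁.2 c₂ hc₂)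
      have hC : B m₁ m₂ = 0 := hM m₁ hm₁.1 m₂ hm₂.1
      rw [hyd] at hA
      rw [hxd, hyd]
      simp only [map_add, LinearMap.add_apply] at hA ⊢
      linear_combination hA + hB + hC
  intro x y
  have hx : x ∈ ⨆ n, W1n n := by rw [h1.submodule_iSup_eq_top]; trivial
  refine Submodule.iSup_induction (motive := fun x => ∀ y : W₂, B x y = 0)
    W1n hx ?_ (by simp) (fun a b ha hb y => by simp [ha y, hb y]) y
  intro n x hx y
  have hy : y ∈ ⨆ m, W2n m := by rw [h2.submodule_iSup_eq_top]; trivial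
  refine Submodule.iSup_induction (motive := fun y => B x y = 0)
    W2n hy ?_ (by simp) (fun a b ha hb => by simp [ha, hb])
  intro m y hy
  exact key (n + m) n m rfl x hx y hy
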